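/- Let q be a prime power. For every function f : F_q^2 → ℂ one has ‖M_2 f‖_{ℓ^2(P^1(F_q))} ≤ √2 · q^{1/2} · ‖f‖_{ℓ^2(F_q^2)}. -/

import Mathlib

/-!
`K` plays the role of the finite field `F_q` with `q = Fintype.card K` elements
(the cardinality of a finite field is automatically a prime power).
The Heisenberg group `H₁(F_q)` is identified with `K × K × K`.
The projective line `P¹(F_q)` is identified with `Option K`, where `some m`
corresponds to the direction class `[1 : m]` and `none` to `[0 : 1]`
(every class has a unique such normal form).
-/

noncomputable section

open Finset

/-- Representative direction vector of a projective class. -/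
def dirVec {K : Type*} [Field K] : Option K → K × K
  | some m => (1, m)
  | none => (0, 1)

/-- The point of the horizontal line through `p = (x₀, y₀, t₀)` with direction
vector `v = (a, b)` corresponding to the parameter `s`, namely
`(x₀ + s a, y₀ + s b, t₀ + s (x₀ b - y₀ a))`. -/
def hPoint {K : Type*} [Field K] (p : K × K × K) (v : K × K) (s : K) : K × K × K :=
  (p.1 + s * v.1, p.2.1 + s * v.2, p.2.2 + s * (p.1 * v.2 - p.2.1 * v.1))

/-- Sum of `|F|` along the horizontal line through `p` with direction vector `v`. -/
def lineSumH1 {K : Type*} [Field K] [Fintype K] (Fc : K × K × K → ℂ)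
    (p : K × K × K) (v : K × K) : ℝ :=
  ∑ s : K, ‖Fc (hPoint p v s)‖

/-- The horizontal Kakeya maximal function `M_{H₁} F` on `P¹(F_q) ≃ Option K`:
the maximum over all base points `p` of the sum of `|F|` along the horizontal
line through `p` in the given direction. -/
def MH1 {K : Type*} [Field K] [Fintype K] (Fc : K × K × K → ℂ) (d : Option K) : ℝ :=
  Finset.univ.sup' ⟨((0 : K), (0 : K), (0 : K)), Finset.mem_univ _⟩
    fun p => lineSumH1 Fc p (dirVec d)

/-- `ℓ^r` norm of a complex-valued function on a finite set. -/
def lpNormC {X : Type*} [Fintype X] (r : ℝ) (g : X → ℂ) : ℝ :=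
  (∑ x, ‖g x‖ ^ r) ^ (1 / r)

/-- `ℓ^r` norm of a real-valued function on a finite set. -/
def lpNormR {X : Type*} [Fintype X] (r : ℝ) (g : X → ℝ) : ℝ :=
  (∑ x, |g x| ^ r) ^ (1 / r)

/-- Sum of `|f|` along the affine line `{w + s v : s ∈ F_q}` in `F_q²`. -/
def lineSum2 {K : Type*} [Field K] [Fintype K] (f : K × K → ℂ) (w v : K × K) : ℝ :=
  ∑ s : K, ‖f (w.1 + s * v.1, w.2 + s * v.2)‖

/-- The planar Kakeya maximal function `M₂ f` on `P¹(F_q) ≃ Option K`, for a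
complex-valued function on `F_q²`. -/
def M2 {K : Type*} [Field K] [Fintype K] (f : K × K → ℂ) (d : Option K) : ℝ :=
  Finset.univ.sup' ⟨((0 : K), (0 : K)), Finset.mem_univ _⟩
    fun w => lineSum2 f w (dirVec d)

namespace KakeyaAux

def pt {K : Type*} [Field K] (w v : K × K) (s : K) : K × K := (w.1 + s * v.1, w.2 + s * v.2)

lemma pt_inj {K : Type*} [Field K] (d : Option K) (w : K × K) :
    Function.Injective (fun s => pt w (dirVec d) s) := by
  intro s t h
  cases d with
  | some m => simpa [pt, dirVec] using congrArg Prod.fst h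
  | none => simpa [pt, dirVec] using congrArg Prod.snd h

lemma cross_unique {K : Type*} [Field K] {d d' : Option K} (hdd : d ≠ d') {w w' : K × K}
    {s t s' t' : K}
    (h1 : pt w (dirVec d) s = pt w' (dirVec d') t)
    (h2 : pt w (dirVec d) s' = pt w' (dirVec d') t') : s = s' := by
  rw [Prod.ext_iff] at h1 h2
  obtain ⟨h1a, h1b⟩ := h1
  obtain ⟨h2a, h2b⟩ := h2
  cases d with
  | some m =>
    cases d' with
    | some m' =>
      have hm : m ≠ m' := fun h => hdd (by rw [h])
      simp only [pt, dirVec] at h1a h1b h2a h2b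
      have key : (s - s') * (m - m') = 0 := by
        linear_combination h1b - h2b - m' * h1a + m' * h2a
      rcases mul_eq_zero.mp key with h | h
      · exact sub_eq_zero.mp h
      · exact absurd (sub_eq_zero.mp h) hm
    | none =>
      simp only [pt, dirVec] at h1a h2a
      linear_combination h1a - h2a
  | none =>
    cases d' with
    | some m' =>
      simp only [pt, dirVec] at h1a h1b h2a h2b
      linear_combination h1b - h2b - m' * h1a + m' * h2a
    | none => exact absurd rfl hdd

end KakeyaAux

/-- planar Kakeya `ℓ²` bound.  For every `f : F_q² → ℂ`,
`‖M₂ f‖_{ℓ²(P¹(F_q))} ≤ √2 · q^{1/2} · ‖f‖_{ℓ²(F_q²)}`. -/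
theorem stmt_1 {K : Type*} [Field K] [Fintype K] (f : K × K → ℂ) :
    lpNormR 2 (M2 f) ≤
      Real.sqrt 2 * (Fintype.card K : ℝ) ^ ((1 : ℝ) / 2) * lpNormC 2 f := by
  classical
  set q : ℕ := Fintype.card K with hq
  set A : K × K → ℝ := fun x => ‖f x‖ with hA
  -- choose a maximizing line for each direction
  have hsel : ∀ d : Option K, ∃ w : K × K, M2 f d = lineSum2 f w (dirVec d) := by
    intro d
    obtain ⟨w, -, hw⟩ := Finset.exists_mem_eq_sup'
      (⟨((0 : K), (0 : K)), Finset.mem_univ _⟩ : (Finset.univ : Finset (K × K)).Nonempty)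
      (fun w => lineSum2 f w (dirVec d))
    exact ⟨w, hw⟩
  choose w hw using hsel
  have hMnn : ∀ d, 0 ≤ M2 f d := by
    intro d
    have h0 : lineSum2 f ((0 : K), (0 : K)) (dirVec d) ≤ M2 f d :=
      Finset.le_sup' (fun w => lineSum2 f w (dirVec d)) (Finset.mem_univ _)
    have h1 : (0 : ℝ) ≤ lineSum2 f ((0 : K), (0 : K)) (dirVec d) :=
      Finset.sum_nonneg fun _ _ => norm_nonneg _
    linarith
  set M : Option K → ℝ := M2 f with hM
  set P : Option K → K → K × K := fun d s => KakeyaAux.pt (w d) (dirVec d) s with hP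
  set c : Option K → K × K → ℝ := fun d x => ∑ s : K, if P d s = x then (1 : ℝ) else 0 with hc
  have hc1 : ∀ (d : Option K) (h : K × K → ℝ), ∑ x, c d x * h x = ∑ s, h (P d s) := by
    intro d h
    simp only [hc, Finset.sum_mul, ite_mul, one_mul, zero_mul]
    rw [Finset.sum_comm]
    refine Finset.sum_congr rfl fun s _ => ?_
    simp
  set g : K × K → ℝ := fun x => ∑ d : Option K, M d * c d x with hg
  set S : ℝ := ∑ d : Option K, M d ^ 2 with hS
  set T : ℝ := ∑ x : K × K, A x ^ 2 with hT
  have hS0 : (0 : ℝ) ≤ S := Finset.sum_nonneg fun _ _ => sq_nonneg _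
  have hT0 : (0 : ℝ) ≤ T := Finset.sum_nonneg fun _ _ => sq_nonneg _
  have hq1 : (1 : ℝ) ≤ (q : ℝ) := by exact_mod_cast Fintype.card_pos
  have hline : ∀ d, M d = ∑ s, A (P d s) := by
    intro d
    rw [hw d]
    rfl
  -- S as an inner product
  have hSg : S = ∑ x, A x * g x := by
    calc S = ∑ d, M d * M d := by simp [hS, sq]
      _ = ∑ d, M d * ∑ x, c d x * A x := by
          refine Finset.sum_congr rfl fun d _ => ?_
          rw [hc1 d A, ← hline d]
      _ = ∑ d, ∑ x, A x * (M d * c d x) := by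
          refine Finset.sum_congr rfl fun d _ => ?_
          rw [Finset.mul_sum]
          exact Finset.sum_congr rfl fun x _ => by ring
      _ = ∑ x, A x * g x := by
          rw [Finset.sum_comm]
          refine Finset.sum_congr rfl fun x _ => ?_
          rw [hg, Finset.mul_sum]
  -- intersection counts
  have hcc : ∀ d d', ∑ x, c d x * c d' x = ∑ t, c d (P d' t) := by
    intro d d'
    rw [← hc1 d' (c d)]
    exact Finset.sum_congr rfl fun x _ => mul_comm _ _
  have hNdiag : ∀ d, ∑ x, c d x * c d x ≤ (q : ℝ) := by
    intro d
    rw [hcc d d]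
    have h1 : ∀ t : K, c d (P d t) = 1 := by
      intro t
      simp only [hc, hP]
      simp [(KakeyaAux.pt_inj d (w d)).eq_iff]
    simp [h1, hq]
  have hNcross : ∀ d d', d ≠ d' → ∑ x, c d x * c d' x ≤ 1 := by
    intro d d' hdd
    rw [hcc d d']
    simp only [hc]
    rw [← Finset.sum_product']
    rw [Finset.sum_boole]
    norm_cast
    refine Finset.card_le_one.mpr ?_
    rintro ⟨t₁, s₁⟩ h₁ ⟨t₂, s₂⟩ h₂
    simp only [Finset.mem_filter, Finset.mem_product, Finset.mem_univ, true_and] at h₁ h₂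
    have hs : s₁ = s₂ := KakeyaAux.cross_unique hdd h₁ h₂
    have ht : t₁ = t₂ := by
      apply KakeyaAux.pt_inj d' (w d')
      have := h₁.symm.trans (hs ▸ h₂)
      exact this
    exact Prod.ext ht hs
  -- bound on ‖g‖²
  have hg2 : ∑ x, g x ^ 2 ≤ 2 * (q : ℝ) * S := by
    have expand : ∑ x, g x ^ 2 = ∑ d, ∑ d', (M d * M d') * ∑ x, c d x * c d' x := by
      simp only [hg, sq, Finset.sum_mul_sum]
      rw [Finset.sum_comm]
      refine Finset.sum_congr rfl fun d _ => ?_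
      rw [Finset.sum_comm]
      refine Finset.sum_congr rfl fun d' _ => ?_
      rw [Finset.mul_sum]
      exact Finset.sum_congr rfl fun x _ => by ring
    have step : ∑ d, ∑ d', (M d * M d') * ∑ x, c d x * c d' x
        ≤ ∑ d, ∑ d', (M d * M d') * (1 + if d = d' then (q : ℝ) - 1 else 0) := by
      refine Finset.sum_le_sum fun d _ => Finset.sum_le_sum fun d' _ => ?_
      refine mul_le_mul_of_nonneg_left ?_ (mul_nonneg (hMnn d) (hMnn d'))
      by_cases h : d = d'
      · subst h
        rw [if_pos rfl]
        have := hNdiag d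
        linarith
      · rw [if_neg h]
        have := hNcross d d' h
        linarith
    have eval : ∑ d, ∑ d', (M d * M d') * (1 + if d = d' then (q : ℝ) - 1 else 0)
        = (∑ d, M d) ^ 2 + ((q : ℝ) - 1) * S := by
      have e1 : ∀ d : Option K,
          ∑ d' : Option K, (M d * M d') * (1 + if d = d' then (q : ℝ) - 1 else 0)
          = M d * (∑ d' : Option K, M d') + M d * M d * ((q : ℝ) - 1) := by
        intro d
        have : ∀ d' : Option K, (M d * M d') * (1 + if d = d' then (q : ℝ) - 1 else 0)
            = M d * M d' + (if d = d' then M d * M d' * ((q : ℝ) - 1) else 0) := by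
          intro d'
          by_cases h : d = d' <;> simp [h] <;> ring
        simp_rw [this]
        rw [Finset.sum_add_distrib, Finset.sum_ite_eq, if_pos (Finset.mem_univ d),
          Finset.mul_sum]
      simp_rw [e1]
      rw [Finset.sum_add_distrib, ← Finset.sum_mul, hS]
      have e2 : ∑ d : Option K, M d * M d * ((q : ℝ) - 1)
          = ((q : ℝ) - 1) * ∑ d : Option K, M d ^ 2 := by
        rw [Finset.mul_sum]
        exact Finset.sum_congr rfl fun d _ => by ring
      rw [e2, sq]
    have hsum : (∑ d, M d) ^ 2 ≤ ((q : ℝ) + 1) * S := by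
      have hcard := sq_sum_le_card_mul_sum_sq
        (s := (Finset.univ : Finset (Option K))) (f := M)
      have : ((Finset.univ : Finset (Option K)).card : ℝ) = (q : ℝ) + 1 := by
        simp [Fintype.card_option, hq]
      rw [hS]
      calc (∑ d, M d) ^ 2 ≤ ((Finset.univ : Finset (Option K)).card : ℝ) * ∑ d, M d ^ 2 := by
            exact_mod_cast hcard
        _ = ((q : ℝ) + 1) * ∑ d, M d ^ 2 := by rw [this]
    calc ∑ x, g x ^ 2 ≤ (∑ d, M d) ^ 2 + ((q : ℝ) - 1) * S := by
          rw [expand, ← eval]; exact step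
      _ ≤ ((q : ℝ) + 1) * S + ((q : ℝ) - 1) * S := by
          have : (0:ℝ) ≤ ((q : ℝ) - 1) * S := mul_nonneg (by linarith) hS0
          linarith [hsum]
      _ = 2 * (q : ℝ) * S := by ring
  -- Cauchy–Schwarz
  have hCS : S ^ 2 ≤ T * (2 * (q : ℝ) * S) := by
    have h1 := Finset.sum_mul_sq_le_sq_mul_sq Finset.univ A g
    rw [← hSg, ← hT] at h1
    calc S ^ 2 ≤ T * ∑ x, g x ^ 2 := h1
      _ ≤ T * (2 * (q : ℝ) * S) := mul_le_mul_of_nonneg_left hg2 hT0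
  have hfinal : S ≤ 2 * (q : ℝ) * T := by
    rcases hS0.eq_or_lt with h | h
    · rw [← h]; positivity
    · nlinarith [hCS, h]
  -- convert norms to square roots
  have hLHS : lpNormR 2 (M2 f) = Real.sqrt S := by
    rw [lpNormR, hS]
    rw [show (2 : ℝ) = ((2 : ℕ) : ℝ) by norm_num]
    simp_rw [Real.rpow_natCast, sq_abs]
    rw [show ((2:ℕ):ℝ) = (2:ℝ) by norm_num, ← Real.sqrt_eq_rpow]
  have hRHS : lpNormC 2 f = Real.sqrt T := by
    rw [lpNormC, hT]
    rw [show (2 : ℝ) = ((2 : ℕ) : ℝ) by norm_num]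
    simp_rw [Real.rpow_natCast]
    rw [show ((2:ℕ):ℝ) = (2:ℝ) by norm_num, ← Real.sqrt_eq_rpow]
  have hQ : ((Fintype.card K : ℝ)) ^ ((1 : ℝ) / 2) = Real.sqrt (q : ℝ) := by
    rw [Real.sqrt_eq_rpow, hq]
  rw [hLHS, hRHS, hQ]
  calc Real.sqrt S ≤ Real.sqrt (2 * (q : ℝ) * T) := Real.sqrt_le_sqrt hfinal
    _ = Real.sqrt 2 * Real.sqrt (q : ℝ) * Real.sqrt T := by
        rw [Real.sqrt_mul (by positivity), Real.sqrt_mul (by norm_num)]
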